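/- arXiv:1911.06769 — 5 statements merged into one kernel-verified Lean document; each statement's English description precedes it below -/
import Mathlib

section
/- For every x > 0, liminf_{T→∞} (1/T) ln P(ξ_T(1) > x) ≥ −I(x). -/
open MeasureTheory ProbabilityTheory Filter

/-- Transition probabilities of the population chain with linear growth and
uniform catastrophes. -/
noncomputable def transP (lam mu : ℝ) (i j : ℕ) : ℝ :=
  if i = 0 then (if j = 1 then 1 else 0)
  else if j = i + 1 then lam / (lam + mu)
  else if j < i then mu / (i * (lam + mu))
  else 0

/-- `eta` is (a realization of) the Markov chain started at `0` with
transition probabilities `transP lam mu`. -/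
def IsCatastropheChain {Ω : Type*} [MeasureSpace Ω] (lam mu : ℝ)
    (eta : Ω → ℕ → ℕ) : Prop :=
  (∀ k, Measurable fun ω => eta ω k) ∧
  (ℙ {ω | eta ω 0 = 0} = 1) ∧
  (∀ (k : ℕ) (f : ℕ → ℕ) (j : ℕ),
    ℙ {ω | eta ω (k + 1) = j ∧ ∀ l ≤ k, eta ω l = f l}
      = ENNReal.ofReal (transP lam mu (f k) j) * ℙ {ω | ∀ l ≤ k, eta ω l = f l})

/-- `N` is a Poisson random variable with mean `m`. -/
noncomputable def IsPoissonRV {Ω : Type*} [MeasureSpace Ω] (m : ℝ) (N : Ω → ℕ) : Prop :=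
  Measurable N ∧
  ∀ k : ℕ, ℙ {ω | N ω = k} = ENNReal.ofReal (Real.exp (-m) * m ^ k / (Nat.factorial k))

/-- The rate function of the LDP. -/
noncomputable def rateI (lam mu alpha : ℝ) (x : ℝ) : EReal :=
  if x < 0 then ⊤
  else if x < alpha then ((x * Real.log ((lam + mu) / lam) : ℝ) : EReal)
  else ((x * Real.log (x * (lam + mu) / (alpha * lam)) - x + alpha : ℝ) : EReal)

open Topology

set_option linter.unusedSectionVars false


lemma fact_bound (n : ℕ) (hn : 1 ≤ n) :
    (n.factorial : ℝ) ≤ Real.exp (1 - n) * (n : ℝ) ^ (n + 1) := by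
  induction n, hn using Nat.le_induction with
  | base => simp [Nat.factorial]
  | succ n hn ih =>
    have hnpos : (0:ℝ) < n := by exact_mod_cast hn
    have h1 : Real.exp (((n:ℝ)+1)⁻¹) ≤ ((n:ℝ)+1)/n := by
      have ht : ((n:ℝ)+1)⁻¹ < 1 := by
        rw [inv_lt_one_iff₀]; right; linarith
      have := Real.add_one_le_exp (-(((n:ℝ)+1)⁻¹))
      have h2 : Real.exp (((n:ℝ)+1)⁻¹) ≤ (1 - ((n:ℝ)+1)⁻¹)⁻¹ := by
        rw [le_inv_comm₀ (Real.exp_pos _) (by linarith)]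
        calc 1 - ((n:ℝ)+1)⁻¹ ≤ Real.exp (-(((n:ℝ)+1)⁻¹)) := by linarith
        _ = (Real.exp (((n:ℝ)+1)⁻¹))⁻¹ := Real.exp_neg _
      calc Real.exp (((n:ℝ)+1)⁻¹) ≤ (1 - ((n:ℝ)+1)⁻¹)⁻¹ := h2
      _ = ((n:ℝ)+1)/n := by
          rw [eq_div_iff (ne_of_gt hnpos)]
          field_simp
          rw [add_sub_cancel_right, div_self (ne_of_gt hnpos)]
    have key : Real.exp 1 * (n:ℝ)^(n+1) ≤ ((n:ℝ)+1)^(n+1) := by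
      have e1 : Real.exp 1 = (Real.exp (((n:ℝ)+1)⁻¹))^(n+1) := by
        rw [← Real.exp_nat_mul]
        congr 1
        push_cast
        field_simp
      rw [e1]
      calc (Real.exp (((n:ℝ)+1)⁻¹))^(n+1) * (n:ℝ)^(n+1)
          ≤ (((n:ℝ)+1)/n)^(n+1) * (n:ℝ)^(n+1) := by
            gcongr
      _ = ((n:ℝ)+1)^(n+1) := by
          rw [div_pow, div_mul_cancel₀ _ (by positivity : ((n:ℝ)^(n+1)) ≠ 0)]
    have step : ((n:ℝ)+1) * ((n.factorial : ℝ)) ≤ ((n:ℝ)+1) * (Real.exp (1-n) * (n:ℝ)^(n+1)) := by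
      gcongr
    have e2 : Real.exp (1 - (n:ℝ)) = Real.exp (1 - ((n:ℝ)+1)) * Real.exp 1 := by
      rw [← Real.exp_add]; ring_nf
    calc ((n+1).factorial : ℝ) = ((n:ℝ)+1) * (n.factorial : ℝ) := by
          push_cast [Nat.factorial_succ]; ring
    _ ≤ ((n:ℝ)+1) * (Real.exp (1-n) * (n:ℝ)^(n+1)) := step
    _ = Real.exp (1 - ((n:ℝ)+1)) * (Real.exp 1 * (n:ℝ)^(n+1)) * ((n:ℝ)+1) := by
        rw [e2]; ring
    _ ≤ Real.exp (1 - ((n:ℝ)+1)) * ((n:ℝ)+1)^(n+1) * ((n:ℝ)+1) := by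
        gcongr
    _ = Real.exp (1 - (↑(n+1):ℝ)) * (↑(n+1):ℝ)^(n+1+1) := by
        push_cast; ring

lemma log_fact_le (n : ℕ) (hn : 1 ≤ n) :
    Real.log (n.factorial) ≤ 1 - n + (n + 1) * Real.log n := by
  have hf : (0:ℝ) < (n.factorial : ℝ) := by exact_mod_cast n.factorial_pos
  calc Real.log (n.factorial) ≤ Real.log (Real.exp (1 - n) * (n:ℝ)^(n+1)) :=
        Real.log_le_log hf (fact_bound n hn)
  _ = 1 - n + (n+1) * Real.log n := by
      rw [Real.log_mul (Real.exp_ne_zero _) (by positivity), Real.log_exp, Real.log_pow]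
      push_cast; ring

lemma transP_up_ge {lam mu : ℝ} (hlam : 0 < lam) (hmu : 0 < mu) (i : ℕ) :
    lam / (lam + mu) ≤ transP lam mu i (i + 1) := by
  have h1 : lam / (lam + mu) ≤ 1 := by
    rw [div_le_one (by linarith)]; linarith
  rcases eq_or_ne i 0 with rfl | h
  · simpa [transP] using h1
  · simp [transP, h]

section chain
variable {Ω : Type*} [MeasureSpace Ω] [IsProbabilityMeasure (ℙ : Measure Ω)]
  {lam mu : ℝ} {eta : Ω → ℕ → ℕ}

/-- Extension of a finite trajectory by unit up-steps. -/
noncomputable def upExt (K : ℕ) (v : Fin (K + 1) → ℕ) (l : ℕ) : ℕ :=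
  if h : l < K + 1 then v ⟨l, h⟩ else v ⟨K, K.lt_succ_self⟩ + (l - K)

lemma upExt_le {K : ℕ} (v : Fin (K + 1) → ℕ) {l : ℕ} (hl : l ≤ K) :
    upExt K v l = v ⟨l, Nat.lt_succ_of_le hl⟩ := by
  simp [upExt, Nat.lt_succ_of_le hl]

lemma upExt_add {K : ℕ} (v : Fin (K + 1) → ℕ) (j : ℕ) :
    upExt K v (K + j) = v ⟨K, K.lt_succ_self⟩ + j := by
  rcases Nat.eq_zero_or_pos j with rfl | hj
  · simp [upExt]
  · have : ¬ (K + j < K + 1) := by omega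
    simp only [upExt, dif_neg this]
    congr 1
    omega

lemma cyl_measurable (hEta : IsCatastropheChain lam mu eta) (n : ℕ) (f : ℕ → ℕ) :
    MeasurableSet {ω | ∀ l ≤ n, eta ω l = f l} := by
  have : {ω | ∀ l ≤ n, eta ω l = f l}
      = ⋂ (l : ℕ), ⋂ (_ : l ≤ n), (fun ω => eta ω l) ⁻¹' {f l} := by
    ext ω; simp [Set.mem_iInter]
  rw [this]
  exact MeasurableSet.iInter fun l => MeasurableSet.iInter fun _ =>
    (hEta.1 l) (measurableSet_singleton _)

lemma cyl_step (hEta : IsCatastropheChain lam mu eta) (n : ℕ) (f : ℕ → ℕ) :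
    ℙ {ω | ∀ l ≤ n + 1, eta ω l = f l}
      = ENNReal.ofReal (transP lam mu (f n) (f (n + 1))) * ℙ {ω | ∀ l ≤ n, eta ω l = f l} := by
  rw [← hEta.2.2 n f (f (n + 1))]
  congr 1
  ext ω
  simp only [Set.mem_setOf_eq]
  constructor
  · intro h
    exact ⟨h (n+1) le_rfl, fun l hl => h l (le_trans hl (Nat.le_succ n))⟩
  · rintro ⟨h1, h2⟩ l hl
    rcases Nat.le_succ_iff.mp hl with h | h
    · exact h2 l h
    · rw [h]; exact h1

lemma chain_up (hlam : 0 < lam) (hmu : 0 < mu) (hEta : IsCatastropheChain lam mu eta)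
    (K m : ℕ) :
    ENNReal.ofReal ((lam / (lam + mu)) ^ m)
      ≤ ℙ {ω | ∀ j < m, eta ω (K + j + 1) = eta ω (K + j) + 1} := by
  set p := lam / (lam + mu) with hp
  have hp0 : 0 ≤ p := by positivity
  -- lower bound for each cylinder
  have key : ∀ (v : Fin (K + 1) → ℕ) (j : ℕ),
      ENNReal.ofReal (p ^ j) * ℙ {ω | ∀ l ≤ K, eta ω l = upExt K v l}
        ≤ ℙ {ω | ∀ l ≤ K + j, eta ω l = upExt K v l} := by
    intro v j
    induction j with
    | zero => simp
    | succ j ih =>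
      have hstep := cyl_step hEta (K + j) (upExt K v)
      have hup : upExt K v (K + j + 1) = upExt K v (K + j) + 1 := by
        have a1 : upExt K v (K + j + 1) = v ⟨K, K.lt_succ_self⟩ + (j + 1) := by
          rw [Nat.add_assoc]; exact upExt_add v (j + 1)
        rw [a1, upExt_add]; omega
      have htr : p ≤ transP lam mu (upExt K v (K + j)) (upExt K v (K + j + 1)) := by
        rw [hup]; exact transP_up_ge hlam hmu _
      calc ENNReal.ofReal (p ^ (j + 1)) * ℙ {ω | ∀ l ≤ K, eta ω l = upExt K v l}
          = ENNReal.ofReal p * (ENNReal.ofReal (p ^ j) * ℙ {ω | ∀ l ≤ K, eta ω l = upExt K v l}) := by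
            rw [pow_succ, ENNReal.ofReal_mul (by positivity), mul_comm (ENNReal.ofReal (p^j)), mul_assoc]
      _ ≤ ENNReal.ofReal (transP lam mu (upExt K v (K + j)) (upExt K v (K + j + 1)))
            * ℙ {ω | ∀ l ≤ K + j, eta ω l = upExt K v l} := by
            exact mul_le_mul' (ENNReal.ofReal_le_ofReal htr) ih
      _ = ℙ {ω | ∀ l ≤ K + j + 1, eta ω l = upExt K v l} := (hstep).symm
  -- disjointness
  have hdisj : Pairwise (Function.onFun Disjoint
      fun v : Fin (K+1) → ℕ => {ω | ∀ l ≤ K + m, eta ω l = upExt K v l}) := by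
    intro v w hvw
    rw [Function.onFun, Set.disjoint_left]
    intro ω hv hw
    apply hvw
    funext i
    have h1 := hv i (le_trans (Nat.le_of_lt_succ i.isLt) (Nat.le_add_right K m))
    have h2 := hw i (le_trans (Nat.le_of_lt_succ i.isLt) (Nat.le_add_right K m))
    rw [upExt_le v (Nat.le_of_lt_succ i.isLt)] at h1
    rw [upExt_le w (Nat.le_of_lt_succ i.isLt)] at h2
    rw [← h1, ← h2]
  have hdisjK : Pairwise (Function.onFun Disjoint
      fun v : Fin (K+1) → ℕ => {ω | ∀ l ≤ K, eta ω l = upExt K v l}) := by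
    intro v w hvw
    rw [Function.onFun, Set.disjoint_left]
    intro ω hv hw
    apply hvw
    funext i
    have h1 := hv i (Nat.le_of_lt_succ i.isLt)
    have h2 := hw i (Nat.le_of_lt_succ i.isLt)
    rw [upExt_le v (Nat.le_of_lt_succ i.isLt)] at h1
    rw [upExt_le w (Nat.le_of_lt_succ i.isLt)] at h2
    rw [← h1, ← h2]
  -- union at time K is everything
  have hunion : (⋃ v : Fin (K+1) → ℕ, {ω | ∀ l ≤ K, eta ω l = upExt K v l}) = Set.univ := by
    ext ω
    simp only [Set.mem_iUnion, Set.mem_univ, iff_true]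
    refine ⟨fun i => eta ω i, fun l hl => ?_⟩
    rw [upExt_le _ hl]
  calc ENNReal.ofReal (p ^ m)
      = ENNReal.ofReal (p ^ m) * ℙ (Set.univ : Set Ω) := by simp
  _ = ENNReal.ofReal (p ^ m) * ∑' v : Fin (K+1) → ℕ, ℙ {ω | ∀ l ≤ K, eta ω l = upExt K v l} := by
      rw [← hunion, measure_iUnion hdisjK fun v => cyl_measurable hEta K _]
  _ = ∑' v : Fin (K+1) → ℕ, ENNReal.ofReal (p ^ m) * ℙ {ω | ∀ l ≤ K, eta ω l = upExt K v l} := by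
      rw [ENNReal.tsum_mul_left]
  _ ≤ ∑' v : Fin (K+1) → ℕ, ℙ {ω | ∀ l ≤ K + m, eta ω l = upExt K v l} :=
      ENNReal.tsum_le_tsum fun v => key v m
  _ = ℙ (⋃ v : Fin (K+1) → ℕ, {ω | ∀ l ≤ K + m, eta ω l = upExt K v l}) :=
      (measure_iUnion hdisj fun v => cyl_measurable hEta _ _).symm
  _ ≤ ℙ {ω | ∀ j < m, eta ω (K + j + 1) = eta ω (K + j) + 1} := by
      apply measure_mono
      intro ω hω
      rcases Set.mem_iUnion.mp hω with ⟨v, hv⟩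
      intro j hj
      have e1 := hv (K + j + 1) (by omega)
      have e2 := hv (K + j) (by omega)
      have a1 : upExt K v (K + j + 1) = v ⟨K, K.lt_succ_self⟩ + (j + 1) := by
        rw [Nat.add_assoc]; exact upExt_add v (j + 1)
      rw [e1, e2, a1, upExt_add]; omega

end chain

lemma event_bound {Ω : Type*} [MeasureSpace Ω] [IsProbabilityMeasure (ℙ : Measure Ω)]
    {lam mu alpha : ℝ} (hlam : 0 < lam) (hmu : 0 < mu) (halpha : 0 < alpha)
    {eta : Ω → ℕ → ℕ} (hEta : IsCatastropheChain lam mu eta)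
    {NT : Ω → ℕ} {T : ℝ} (hT : 0 < T)
    (hNT : IsPoissonRV (alpha * T) NT) (hind : IndepFun NT eta ℙ)
    {x : ℝ} (n₀ m : ℕ) (hmn : m ≤ n₀) (hxm : x * T < m) :
    ENNReal.ofReal (Real.exp (-(alpha * T)) * (alpha * T) ^ n₀ / (n₀.factorial) *
        (lam / (lam + mu)) ^ m)
      ≤ ℙ {ω | x < (eta ω (NT ω) : ℝ) / T} := by
  set p := lam / (lam + mu) with hp
  set K := n₀ - m with hK
  have hKm : K + m = n₀ := by omega
  set B : Set (ℕ → ℕ) := {g | ∀ j < m, g (K + j + 1) = g (K + j) + 1} with hB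
  have hBmeas : MeasurableSet B := by
    have : B = ⋂ (j : ℕ), ⋂ (_ : j < m), {g : ℕ → ℕ | g (K + j + 1) = g (K + j) + 1} := by
      ext g; simp [hB, Set.mem_iInter]
    rw [this]
    refine MeasurableSet.iInter fun j => MeasurableSet.iInter fun _ => ?_
    exact measurableSet_eq_fun (measurable_pi_apply _)
      ((measurable_from_top).comp (measurable_pi_apply (K + j)))
  have hsub : NT ⁻¹' {n₀} ∩ eta ⁻¹' B ⊆ {ω | x < (eta ω (NT ω) : ℝ) / T} := by
    rintro ω ⟨h1, h2⟩
    have hNo : NT ω = n₀ := h1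
    have hstep : ∀ j ≤ m, eta ω (K + j) = eta ω K + j := by
      intro j hj
      induction j with
      | zero => rfl
      | succ j ih =>
        have := h2 j (by omega)
        rw [show K + (j + 1) = K + j + 1 from rfl, this, ih (by omega)]; omega
    have hval : (m : ℝ) ≤ (eta ω (NT ω) : ℝ) := by
      have : eta ω n₀ = eta ω K + m := by rw [← hKm]; exact hstep m le_rfl
      rw [hNo, this]
      push_cast
      linarith [Nat.cast_nonneg (α := ℝ) (eta ω K)]
    have : x * T < (eta ω (NT ω) : ℝ) := lt_of_lt_of_le hxm hval
    simpa [Set.mem_setOf_eq, lt_div_iff₀ hT] using this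
  have hindep := hind.measure_inter_preimage_eq_mul _ _ (measurableSet_singleton n₀) hBmeas
  have hPois : ℙ (NT ⁻¹' {n₀})
      = ENNReal.ofReal (Real.exp (-(alpha * T)) * (alpha * T) ^ n₀ / (n₀.factorial)) := by
    have := hNT.2 n₀
    convert this using 2
    rfl
  have hChain : ENNReal.ofReal (p ^ m) ≤ ℙ (eta ⁻¹' B) := by
    have : eta ⁻¹' B = {ω | ∀ j < m, eta ω (K + j + 1) = eta ω (K + j) + 1} := rfl
    rw [this]
    exact chain_up hlam hmu hEta K m
  calc ENNReal.ofReal (Real.exp (-(alpha * T)) * (alpha * T) ^ n₀ / (n₀.factorial) * p ^ m)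
      = ENNReal.ofReal (Real.exp (-(alpha * T)) * (alpha * T) ^ n₀ / (n₀.factorial))
        * ENNReal.ofReal (p ^ m) := by
        rw [ENNReal.ofReal_mul (div_nonneg (mul_nonneg (Real.exp_pos _).le
          (pow_nonneg (mul_pos halpha hT).le _)) (Nat.cast_nonneg _))]
  _ ≤ ℙ (NT ⁻¹' {n₀}) * ℙ (eta ⁻¹' B) := by
      rw [hPois]
      exact mul_le_mul' le_rfl hChain
  _ = ℙ (NT ⁻¹' {n₀} ∩ eta ⁻¹' B) := hindep.symm
  _ ≤ _ := measure_mono hsub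

open Topology in
lemma floor_div_tendsto {c : ℝ} (hc : 0 < c) :
    Tendsto (fun T : ℝ => ((⌊c * T⌋₊ : ℝ)) / T) atTop (𝓝 c) := by
  have hlo : Tendsto (fun T : ℝ => c - 1 / T) atTop (𝓝 c) := by
    have h0 : Tendsto (fun T : ℝ => 1 / T) atTop (𝓝 0) :=
      Tendsto.const_div_atTop tendsto_id 1
    simpa using tendsto_const_nhds.sub h0
  refine tendsto_of_tendsto_of_tendsto_of_le_of_le' hlo tendsto_const_nhds ?_ ?_
  · filter_upwards [eventually_ge_atTop (1:ℝ)] with T hT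
    have hT0 : (0:ℝ) < T := by linarith
    have h1 : c * T - 1 < (⌊c * T⌋₊ : ℝ) := Nat.sub_one_lt_floor _
    have : c - 1 / T = (c * T - 1) / T := by field_simp
    rw [this]
    gcongr
  · filter_upwards [eventually_ge_atTop (1:ℝ)] with T hT
    have hT0 : (0:ℝ) < T := by linarith
    rw [div_le_iff₀ hT0]
    exact Nat.floor_le (by positivity)

lemma ceil_div_tendsto {c : ℝ} (hc : 0 < c) :
    Tendsto (fun T : ℝ => ((⌈c * T⌉₊ : ℝ) + 1) / T) atTop (𝓝 c) := by
  have hhi : Tendsto (fun T : ℝ => c + 2 / T) atTop (𝓝 c) := by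
    have h0 : Tendsto (fun T : ℝ => 2 / T) atTop (𝓝 0) :=
      Tendsto.const_div_atTop tendsto_id 2
    simpa using tendsto_const_nhds.add h0
  refine tendsto_of_tendsto_of_tendsto_of_le_of_le' tendsto_const_nhds hhi ?_ ?_
  · filter_upwards [eventually_ge_atTop (1:ℝ)] with T hT
    have hT0 : (0:ℝ) < T := by linarith
    rw [le_div_iff₀ hT0]
    have := Nat.le_ceil (c * T)
    linarith
  · filter_upwards [eventually_ge_atTop (1:ℝ)] with T hT
    have hT0 : (0:ℝ) < T := by linarith
    rw [div_le_iff₀ hT0]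
    have h1 : (⌈c * T⌉₊ : ℝ) < c * T + 1 := Nat.ceil_lt_add_one (by positivity)
    have : (c + 2 / T) * T = c * T + 2 := by field_simp
    rw [this]
    linarith

lemma g_tendsto (alpha x p : ℝ) (halpha : 0 < alpha) (hx : 0 < x) :
    Tendsto (fun T : ℝ => (1 / T) *
      (-(alpha * T) + ((max ⌊alpha * T⌋₊ (⌈x * T⌉₊ + 1) : ℕ) : ℝ) * Real.log (alpha * T)
        - (1 - ((max ⌊alpha * T⌋₊ (⌈x * T⌉₊ + 1) : ℕ) : ℝ)
            + (((max ⌊alpha * T⌋₊ (⌈x * T⌉₊ + 1) : ℕ) : ℝ) + 1)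
              * Real.log ((max ⌊alpha * T⌋₊ (⌈x * T⌉₊ + 1) : ℕ) : ℝ))
        + ((⌈x * T⌉₊ : ℝ) + 1) * Real.log p)) atTop
      (𝓝 (-alpha + (max alpha x) * (Real.log (alpha / (max alpha x)) + 1) + x * Real.log p)) := by
  set M : ℝ := max alpha x with hM
  have hM0 : 0 < M := lt_of_lt_of_le halpha (le_max_left _ _)
  set nn : ℝ → ℕ := fun T => max ⌊alpha * T⌋₊ (⌈x * T⌉₊ + 1) with hnn
  set cn : ℝ → ℝ := fun T => (nn T : ℝ) / T with hcn_def
  have hnn1 : ∀ T : ℝ, 1 ≤ nn T := fun T => le_trans (by omega) (le_max_right _ _)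
  have hpos : ∀ᶠ T : ℝ in atTop, 1 ≤ T := eventually_ge_atTop 1
  -- cn tends to M
  have hcn : Tendsto cn atTop (𝓝 M) := by
    have heq : ∀ᶠ T : ℝ in atTop,
        max ((⌊alpha * T⌋₊ : ℝ) / T) (((⌈x * T⌉₊ : ℝ) + 1) / T) = cn T := by
      filter_upwards [hpos] with T hT
      have hT0 : (0:ℝ) < T := by linarith
      rw [hcn_def]
      simp only [hnn]
      push_cast
      rw [← max_div_div_right hT0.le]
    exact Tendsto.congr' heq ((floor_div_tendsto halpha).max (ceil_div_tendsto hx))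
  have hmn : Tendsto (fun T : ℝ => ((⌈x * T⌉₊ : ℝ) + 1) / T) atTop (𝓝 x) := ceil_div_tendsto hx
  -- log cn tendsto
  have hlogcn : Tendsto (fun T => Real.log (cn T)) atTop (𝓝 (Real.log M)) :=
    ((Real.continuousAt_log hM0.ne').tendsto).comp hcn
  -- dn
  have hdn : Tendsto (fun T => Real.log (alpha * T) - Real.log (nn T)) atTop
      (𝓝 (Real.log (alpha / M))) := by
    have base : Tendsto (fun T => Real.log (alpha / cn T)) atTop (𝓝 (Real.log (alpha / M))) :=
      ((Real.continuousAt_log (by positivity)).tendsto).comp (tendsto_const_nhds.div hcn hM0.ne')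
    refine Tendsto.congr' ?_ base
    filter_upwards [hpos] with T hT
    have hT0 : (0:ℝ) < T := by linarith
    have hnnpos : (0:ℝ) < (nn T : ℝ) := by exact_mod_cast hnn1 T
    rw [hcn_def]
    rw [div_div_eq_mul_div, Real.log_div (by positivity) hnnpos.ne', Real.log_mul halpha.ne' hT0.ne']
  -- (log nn + 1)/T → 0
  have hlogn : Tendsto (fun T => (Real.log (nn T) + 1) / T) atTop (𝓝 0) := by
    have t1 : Tendsto (fun T : ℝ => Real.log (cn T) / T) atTop (𝓝 0) :=
      hlogcn.div_atTop tendsto_id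
    have t2 : Tendsto (fun T : ℝ => Real.log T / T) atTop (𝓝 0) :=
      Real.isLittleO_log_id_atTop.tendsto_div_nhds_zero
    have t3 : Tendsto (fun T : ℝ => 1 / T) atTop (𝓝 0) := Tendsto.const_div_atTop tendsto_id 1
    have hsum := (t1.add t2).add t3
    refine Tendsto.congr' ?_ (by simpa using hsum)
    filter_upwards [hpos] with T hT
    have hT0 : (0:ℝ) < T := by linarith
    have hnnpos : (0:ℝ) < (nn T : ℝ) := by exact_mod_cast hnn1 T
    have hcnpos : 0 < cn T := by rw [hcn_def]; positivity
    have : Real.log (nn T) = Real.log (cn T) + Real.log T := by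
      rw [hcn_def, Real.log_div hnnpos.ne' hT0.ne']
      ring
    rw [this]
    ring
  -- combine
  have hfinal := ((tendsto_const_nhds (x := -alpha)).add
      (hcn.mul (hdn.add (tendsto_const_nhds (x := (1:ℝ)))))).sub hlogn |>.add
      (hmn.mul (tendsto_const_nhds (x := Real.log p)))
  have hlim : -alpha + M * (Real.log (alpha / M) + 1) - 0 + x * Real.log p
      = -alpha + M * (Real.log (alpha / M) + 1) + x * Real.log p := by ring
  rw [hlim] at hfinal
  refine Tendsto.congr' ?_ hfinal
  filter_upwards [hpos] with T hT
  have hT0 : (0:ℝ) < T := by linarith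
  rw [hcn_def]
  obtain ⟨n', hn'⟩ : ∃ n' : ℝ, ((nn T : ℕ) : ℝ) = n' := ⟨_, rfl⟩
  obtain ⟨mr, hmr⟩ : ∃ mr : ℝ, ((⌈x * T⌉₊ : ℕ) : ℝ) = mr := ⟨_, rfl⟩
  have hn'' : ((max ⌊alpha * T⌋₊ (⌈x * T⌉₊ + 1) : ℕ) : ℝ) = n' := hn'
  simp only [hn', hn'', hmr]
  field_simp
  ring

lemma ereal_helper {c r : ℝ} (hc : 0 ≤ c) {a : EReal} (h1 : (r : EReal) ≤ a) (h2 : a ≤ 0) :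
    ((c * r : ℝ) : EReal) ≤ (c : EReal) * a := by
  induction a using EReal.rec with
  | bot => simp at h1
  | coe s =>
    rw [← EReal.coe_mul, EReal.coe_le_coe_iff]
    exact mul_le_mul_of_nonneg_left (EReal.coe_le_coe_iff.mp h1) hc
  | top => simp at h2


theorem ldp_lower_bound_tail
    {Ω : Type*} [MeasureSpace Ω] [IsProbabilityMeasure (ℙ : Measure Ω)]
    (lam mu alpha : ℝ) (hlam : 0 < lam) (hmu : 0 < mu) (halpha : 0 < alpha)
    (eta : Ω → ℕ → ℕ) (hEta : IsCatastropheChain lam mu eta)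
    (N : ℝ → Ω → ℕ)
    (hN : ∀ T > (0 : ℝ), IsPoissonRV (alpha * T) (N T))
    (hInd : ∀ T > (0 : ℝ), IndepFun (N T) eta ℙ)
    (x : ℝ) (hx : 0 < x) :
    - rateI lam mu alpha x ≤
      Filter.liminf
        (fun T : ℝ => ((1 / T : ℝ) : EReal) *
          ENNReal.log (ℙ {ω | x < (eta ω (N T ω) : ℝ) / T})) Filter.atTop := by
  have hlm : 0 < lam + mu := by linarith
  set p : ℝ := lam / (lam + mu) with hp
  have hp0 : 0 < p := by positivity
  set M : ℝ := max alpha x with hMdef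
  set L : ℝ := -alpha + M * (Real.log (alpha / M) + 1) + x * Real.log p with hL
  have hrate : - rateI lam mu alpha x = (L : EReal) := by
    rw [rateI, if_neg (not_lt.mpr hx.le)]
    rcases lt_or_ge x alpha with hxa | hxa
    · rw [if_pos hxa, ← EReal.coe_neg]
      congr 1
      have hMa : M = alpha := max_eq_left hxa.le
      rw [hL, hMa, div_self halpha.ne', Real.log_one, hp,
        Real.log_div hlam.ne' hlm.ne', Real.log_div hlm.ne' hlam.ne']
      ring
    · rw [if_neg (not_lt.mpr hxa), ← EReal.coe_neg]
      congr 1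
      have hMa : M = x := max_eq_right hxa
      rw [hL, hMa, hp, Real.log_div halpha.ne' hx.ne', Real.log_div hlam.ne' hlm.ne',
        Real.log_div (by positivity) (by positivity : (alpha * lam) ≠ 0),
        Real.log_mul hx.ne' hlm.ne', Real.log_mul halpha.ne' hlam.ne']
      ring
  rw [hrate]
  have htend := g_tendsto alpha x p halpha hx
  set g : ℝ → ℝ := fun T : ℝ => (1 / T) *
      (-(alpha * T) + ((max ⌊alpha * T⌋₊ (⌈x * T⌉₊ + 1) : ℕ) : ℝ) * Real.log (alpha * T)
        - (1 - ((max ⌊alpha * T⌋₊ (⌈x * T⌉₊ + 1) : ℕ) : ℝ)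
            + (((max ⌊alpha * T⌋₊ (⌈x * T⌉₊ + 1) : ℕ) : ℝ) + 1)
              * Real.log ((max ⌊alpha * T⌋₊ (⌈x * T⌉₊ + 1) : ℕ) : ℝ))
        + ((⌈x * T⌉₊ : ℝ) + 1) * Real.log p) with hgdef
  have hmono : ∀ᶠ T : ℝ in atTop, ((g T : ℝ) : EReal) ≤ ((1 / T : ℝ) : EReal) *
      ENNReal.log (ℙ {ω | x < (eta ω (N T ω) : ℝ) / T}) := by
    filter_upwards [eventually_ge_atTop (1:ℝ)] with T hT
    have hT0 : (0:ℝ) < T := lt_of_lt_of_le one_pos hT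
    have haT : 0 < alpha * T := mul_pos halpha hT0
    set m : ℕ := ⌈x * T⌉₊ + 1 with hm
    set n₀ : ℕ := max ⌊alpha * T⌋₊ m with hn₀
    have hmn : m ≤ n₀ := le_max_right _ _
    have hn1 : 1 ≤ n₀ := le_trans (by omega) hmn
    have hxm : x * T < (m : ℝ) := by
      have := Nat.le_ceil (x * T)
      rw [hm]
      push_cast
      linarith
    have hev := event_bound hlam hmu halpha hEta hT0 (hN T hT0) (hInd T hT0) n₀ m hmn hxm
    set b : ℝ := Real.exp (-(alpha * T)) * (alpha * T) ^ n₀ / (n₀.factorial) * p ^ m with hb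
    have hb0 : 0 < b := by
      rw [hb]
      have : (0:ℝ) < (n₀.factorial : ℝ) := by exact_mod_cast n₀.factorial_pos
      positivity
    have hlog1 : (Real.log b : EReal) ≤ ENNReal.log (ℙ {ω | x < (eta ω (N T ω) : ℝ) / T}) := by
      rw [← ENNReal.log_ofReal_of_pos hb0]
      exact ENNReal.log_monotone hev
    have hle0 : ENNReal.log (ℙ {ω | x < (eta ω (N T ω) : ℝ) / T}) ≤ 0 := by
      rw [ENNReal.log_le_zero_iff]
      exact prob_le_one
    refine le_trans ?_ (ereal_helper (by positivity : (0:ℝ) ≤ 1 / T) hlog1 hle0)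
    rw [EReal.coe_le_coe_iff]
    have hfac : (0:ℝ) < (n₀.factorial : ℝ) := by exact_mod_cast n₀.factorial_pos
    have hlogb : Real.log b = -(alpha * T) + (n₀ : ℝ) * Real.log (alpha * T)
        - Real.log (n₀.factorial) + (m : ℝ) * Real.log p := by
      rw [hb, Real.log_mul (by positivity) (by positivity),
        Real.log_div (by positivity) hfac.ne',
        Real.log_mul (Real.exp_ne_zero _) (by positivity),
        Real.log_exp, Real.log_pow, Real.log_pow]
      try push_cast
      try ring
    rw [hlogb, hgdef]
    have hfact := log_fact_le n₀ hn1
    simp only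
    apply mul_le_mul_of_nonneg_left _ (by positivity : (0:ℝ) ≤ 1 / T)
    have hcast : ((max ⌊alpha * T⌋₊ (⌈x * T⌉₊ + 1) : ℕ) : ℝ) = (n₀ : ℝ) := rfl
    rw [hcast]
    have hcast2 : ((⌈x * T⌉₊ : ℝ) + 1) = (m : ℝ) := by rw [hm]; push_cast; ring
    rw [hcast2]
    linarith
  calc (L : EReal)
      = Filter.liminf (fun T : ℝ => ((g T : ℝ) : EReal)) Filter.atTop := by
        refine (Filter.Tendsto.liminf_eq ?_).symm
        exact EReal.tendsto_coe.mpr htend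
  _ ≤ _ := Filter.liminf_le_liminf hmono
end

section
/- The family ξ_T(1) is exponentially tight with normalizing function ψ(T) = T: for every c > 0 there exists a compact set K_c ⊆ ℝ such that limsup_{T→∞} (1/T) ln P(ξ_T(1) ∉ K_c) < −c. -/
open MeasureTheory ProbabilityTheory Filter

lemma transP_eq_zero {lam mu : ℝ} {i j : ℕ} (h : i + 1 < j) : transP lam mu i j = 0 := by
  unfold transP
  rcases eq_or_ne i 0 with hi | hi
  · subst hi; rw [if_pos rfl, if_neg (by omega)]
  · rw [if_neg hi, if_neg (by omega), if_neg (by omega)]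

-- factorial bound

lemma pow_div_fact_le {m : ℝ} (hm : 0 ≤ m) {n : ℕ} (hn : 1 ≤ n) :
    m ^ n / (Nat.factorial n) ≤ (Real.exp 1 * m / n) ^ n := by
  have hfac : (0:ℝ) < Nat.factorial n := by positivity
  have hnpos : (0:ℝ) < (n:ℝ) := by exact_mod_cast hn
  have h1 : (n:ℝ) ^ n / (Nat.factorial n) ≤ Real.exp 1 ^ n := by
    have := Real.pow_div_factorial_le_exp (n:ℝ) (Nat.cast_nonneg n) n
    rw [show ((n:ℝ)) = (n:ℝ)*1 by ring, Real.exp_nat_mul] at this; simpa using this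
  have h2 : (n:ℝ) ^ n ≤ Real.exp 1 ^ n * Nat.factorial n := by
    rw [div_le_iff₀ hfac] at h1; linarith
  rw [div_pow, mul_pow, div_le_div_iff₀ hfac (by positivity)]
  calc m ^ n * (n:ℝ) ^ n ≤ m ^ n * (Real.exp 1 ^ n * Nat.factorial n) :=
        mul_le_mul_of_nonneg_left h2 (by positivity)
    _ = Real.exp 1 ^ n * m ^ n * Nat.factorial n := by ring

lemma chain_ae_le {Ω : Type*} [MeasureSpace Ω] [IsProbabilityMeasure (ℙ : Measure Ω)]
    {lam mu : ℝ} {eta : Ω → ℕ → ℕ} (hEta : IsCatastropheChain lam mu eta) :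
    ∀ᵐ ω, ∀ k, eta ω k ≤ k := by
  obtain ⟨hMeas, hInit, hTrans⟩ := hEta
  have h1 : ∀ᵐ ω, eta ω 0 = 0 := by
    rw [ae_iff]
    have hms : MeasurableSet {ω | eta ω 0 = 0} :=
      (hMeas 0) (measurableSet_singleton 0)
    have := measure_compl hms (measure_ne_top ℙ _)
    rw [hInit, measure_univ, tsub_self] at this
    simpa [Set.compl_setOf] using this
  have hstep : ∀ k : ℕ, ℙ {ω | eta ω k + 1 < eta ω (k+1)} = 0 := by
    intro k
    set F : (Fin (k+1) → ℕ) → ℕ → ℕ := fun v l => if h : l < k+1 then v ⟨l, h⟩ else 0 with hF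
    have hsub : {ω | eta ω k + 1 < eta ω (k+1)} ⊆
        ⋃ p : ℕ × (Fin (k+1) → ℕ),
          {ω | F p.2 k + 1 < p.1 ∧ eta ω (k+1) = p.1 ∧ ∀ l ≤ k, eta ω l = F p.2 l} := by
      intro ω hω
      refine Set.mem_iUnion.2 ⟨⟨eta ω (k+1), fun l => eta ω l⟩, ?_, rfl, ?_⟩
      · simpa [hF] using hω
      · intro l hl; simp [hF, Nat.lt_succ_of_le hl]; intro h; omega
    refine measure_mono_null hsub (measure_iUnion_null fun p => ?_)
    by_cases hp : F p.2 k + 1 < p.1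
    · have hsub2 : {ω | F p.2 k + 1 < p.1 ∧ eta ω (k+1) = p.1 ∧ ∀ l ≤ k, eta ω l = F p.2 l}
          ⊆ {ω | eta ω (k+1) = p.1 ∧ ∀ l ≤ k, eta ω l = F p.2 l} := fun ω hω => hω.2
      refine measure_mono_null hsub2 ?_
      rw [hTrans k (F p.2) p.1, transP_eq_zero hp, ENNReal.ofReal_zero, zero_mul]
    · have : {ω | F p.2 k + 1 < p.1 ∧ eta ω (k+1) = p.1 ∧ ∀ l ≤ k, eta ω l = F p.2 l} = ∅ := by
        ext ω; simp only [Set.mem_setOf_eq, Set.mem_empty_iff_false, iff_false]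
        exact fun h => hp h.1
      rw [this, measure_empty]
  have h2 : ∀ᵐ ω, ∀ k : ℕ, eta ω (k+1) ≤ eta ω k + 1 := by
    rw [ae_all_iff]
    intro k
    rw [ae_iff]
    simpa [not_le] using hstep k
  filter_upwards [h1, h2] with ω h0 hs
  intro k
  induction k with
  | zero => omega
  | succ n ih => have := hs n; omega

lemma poisson_tail {Ω : Type*} [MeasureSpace Ω] [IsProbabilityMeasure (ℙ : Measure Ω)]
    {m : ℝ} (hm : 0 ≤ m) {N : Ω → ℕ} (hN : IsPoissonRV m N) (n : ℕ) :
    ℙ {ω | n ≤ N ω} ≤ ENNReal.ofReal (m ^ n / (Nat.factorial n)) := by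
  obtain ⟨hNm, hNp⟩ := hN
  have hsum1 : ∑' k : ℕ, ℙ {ω | N ω = k} = 1 := by
    have hdisj : Pairwise (Function.onFun Disjoint fun k : ℕ => {ω | N ω = k}) :=
      fun i j hij => Set.disjoint_left.2 fun ω (h1 : N ω = i) (h2 : N ω = j) => hij (h1 ▸ h2 ▸ rfl)
    have := measure_iUnion (μ := ℙ) hdisj (fun k => hNm (measurableSet_singleton k))
    rw [show (⋃ k : ℕ, {ω | N ω = k}) = Set.univ from
        Set.eq_univ_of_forall fun ω => Set.mem_iUnion.2 ⟨N ω, rfl⟩, measure_univ] at this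
    exact this.symm
  have htail : ℙ {ω | n ≤ N ω} ≤ ∑' k : ℕ, ℙ {ω | N ω = n + k} := by
    refine le_trans (measure_mono ?_) (measure_iUnion_le _)
    intro ω hω
    simp only [Set.mem_setOf_eq] at hω
    exact Set.mem_iUnion.2 ⟨N ω - n, by simp only [Set.mem_setOf_eq]; omega⟩
  have hterm : ∀ k : ℕ, ℙ {ω | N ω = n + k}
      ≤ ENNReal.ofReal (m ^ n / (Nat.factorial n)) * ℙ {ω | N ω = k} := by
    intro k
    rw [hNp, hNp, ← ENNReal.ofReal_mul (by positivity)]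
    refine ENNReal.ofReal_le_ofReal ?_
    have hff : (Nat.factorial n * Nat.factorial k : ℝ) ≤ Nat.factorial (n + k) := by
      exact_mod_cast Nat.le_of_dvd (Nat.factorial_pos _)
        (Nat.factorial_mul_factorial_dvd_factorial_add n k)
    have hrw : m ^ n / (Nat.factorial n) * (Real.exp (-m) * m ^ k / (Nat.factorial k))
        = Real.exp (-m) * m ^ (n + k) / (Nat.factorial n * Nat.factorial k) := by
      rw [pow_add]; field_simp
    rw [hrw]
    apply div_le_div_of_nonneg_left (by positivity) (by positivity) hff
  calc ℙ {ω | n ≤ N ω} ≤ ∑' k : ℕ, ℙ {ω | N ω = n + k} := htail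
    _ ≤ ∑' k : ℕ, ENNReal.ofReal (m ^ n / (Nat.factorial n)) * ℙ {ω | N ω = k} :=
        ENNReal.tsum_le_tsum hterm
    _ = ENNReal.ofReal (m ^ n / (Nat.factorial n)) := by
        rw [ENNReal.tsum_mul_left, hsum1, mul_one]

theorem exponential_tightness_population_catastrophes
    {Ω : Type*} [MeasureSpace Ω] [IsProbabilityMeasure (ℙ : Measure Ω)]
    (lam mu alpha : ℝ) (hlam : 0 < lam) (hmu : 0 < mu) (halpha : 0 < alpha)
    (eta : Ω → ℕ → ℕ) (hEta : IsCatastropheChain lam mu eta)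
    (N : ℝ → Ω → ℕ)
    (hN : ∀ T > (0 : ℝ), IsPoissonRV (alpha * T) (N T))
    (hInd : ∀ T > (0 : ℝ), IndepFun (N T) eta ℙ) :
    ∀ c : ℝ, 0 < c → ∃ K : Set ℝ, IsCompact K ∧
      Filter.limsup
          (fun T : ℝ => ((1 / T : ℝ) : EReal) *
            ENNReal.log (ℙ {ω | ((eta ω (N T ω) : ℝ) / T) ∉ K})) Filter.atTop
        < ((-c : ℝ) : EReal) := by
  intro c hc
  set M : ℝ := max (Real.exp 2 * alpha) (c + 1) with hMdef
  have hM2 : Real.exp 2 * alpha ≤ M := le_max_left _ _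
  have hMc : c + 1 ≤ M := le_max_right _ _
  have hMpos : 0 < M := lt_of_lt_of_le (by linarith) hMc
  refine ⟨Set.Icc 0 M, isCompact_Icc, ?_⟩
  set L : ℝ := Real.log (Real.exp 1 * alpha / M) with hLdef
  have hbasepos : 0 < Real.exp 1 * alpha / M := by positivity
  have hL : L ≤ -1 := by
    rw [hLdef, Real.log_le_iff_le_exp hbasepos]
    calc Real.exp 1 * alpha / M ≤ Real.exp 1 * alpha / (Real.exp 2 * alpha) :=
          div_le_div_of_nonneg_left (by positivity) (by positivity) hM2
      _ = Real.exp (-1) := by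
          rw [mul_div_mul_right _ _ (ne_of_gt halpha), ← Real.exp_sub]; norm_num
  have hGc : ℙ {ω | ¬ ∀ k, eta ω k ≤ k} = 0 := ae_iff.1 (chain_ae_le hEta)
  have hev : ∀ᶠ T in (atTop : Filter ℝ),
      (fun T : ℝ => ((1 / T : ℝ) : EReal) *
        ENNReal.log (ℙ {ω | ((eta ω (N T ω) : ℝ) / T) ∉ Set.Icc 0 M})) T
        ≤ ((-(c+1) : ℝ) : EReal) := by
    filter_upwards [eventually_ge_atTop (1:ℝ)] with T hT1
    have hTpos : (0:ℝ) < T := by linarith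
    set m : ℝ := alpha * T with hmdef
    have hm : 0 ≤ m := by positivity
    set n : ℕ := ⌊M * T⌋₊ + 1 with hndef
    have hn1 : 1 ≤ n := Nat.le_add_left 1 _
    have hMT : M * T < (n : ℝ) := by
      have := Nat.lt_floor_add_one (M * T)
      push_cast [hndef]; linarith
    have hMTpos : 0 < M * T := by positivity
    -- inclusion of the bad event
    have hsub : {ω | ((eta ω (N T ω) : ℝ) / T) ∉ Set.Icc 0 M}
        ⊆ {ω | ¬ ∀ k, eta ω k ≤ k} ∪ {ω | n ≤ N T ω} := by
      intro ω hω
      by_cases hg : ∀ k, eta ω k ≤ k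
      · right
        simp only [Set.mem_setOf_eq, Set.mem_Icc, not_and, not_le] at hω
        have hx : M < (eta ω (N T ω) : ℝ) / T := hω (by positivity)
        have h1 : M * T < (eta ω (N T ω) : ℝ) := (lt_div_iff₀ hTpos).1 hx
        have h2 : (eta ω (N T ω) : ℝ) ≤ (N T ω : ℝ) := by exact_mod_cast hg (N T ω)
        have h3 : ⌊M * T⌋₊ < N T ω := (Nat.floor_lt hMTpos.le).2 (by linarith)
        exact Nat.succ_le_of_lt h3
      · left; exact hg
    -- measure bound
    have hmeasbound : ℙ {ω | ((eta ω (N T ω) : ℝ) / T) ∉ Set.Icc 0 M}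
        ≤ ENNReal.ofReal ((Real.exp 1 * alpha / M) ^ n) := by
      calc ℙ {ω | ((eta ω (N T ω) : ℝ) / T) ∉ Set.Icc 0 M}
          ≤ ℙ ({ω | ¬ ∀ k, eta ω k ≤ k} ∪ {ω | n ≤ N T ω}) := measure_mono hsub
        _ ≤ ℙ {ω | ¬ ∀ k, eta ω k ≤ k} + ℙ {ω | n ≤ N T ω} := measure_union_le _ _
        _ = ℙ {ω | n ≤ N T ω} := by rw [hGc, zero_add]
        _ ≤ ENNReal.ofReal (m ^ n / (Nat.factorial n)) := poisson_tail hm (hN T hTpos) n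
        _ ≤ ENNReal.ofReal ((Real.exp 1 * m / n) ^ n) :=
            ENNReal.ofReal_le_ofReal (pow_div_fact_le hm hn1)
        _ ≤ ENNReal.ofReal ((Real.exp 1 * alpha / M) ^ n) := by
            refine ENNReal.ofReal_le_ofReal (pow_le_pow_left₀ (by positivity) ?_ n)
            calc Real.exp 1 * m / n ≤ Real.exp 1 * m / (M * T) :=
                  div_le_div_of_nonneg_left (by positivity) hMTpos hMT.le
              _ = Real.exp 1 * alpha / M := by
                  rw [hmdef]; field_simp
    -- take logs
    have hlog : ENNReal.log (ℙ {ω | ((eta ω (N T ω) : ℝ) / T) ∉ Set.Icc 0 M})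
        ≤ (((n : ℝ) * L : ℝ) : EReal) := by
      refine le_trans (ENNReal.log_monotone hmeasbound) ?_
      rw [ENNReal.log_ofReal_of_pos (by positivity), Real.log_pow]

    have h0T : (0:EReal) ≤ ((1 / T : ℝ) : EReal) := by
      exact_mod_cast le_of_lt (by positivity : (0:ℝ) < 1 / T)
    calc ((1 / T : ℝ) : EReal) *
          ENNReal.log (ℙ {ω | ((eta ω (N T ω) : ℝ) / T) ∉ Set.Icc 0 M})
        ≤ ((1 / T : ℝ) : EReal) * (((n : ℝ) * L : ℝ) : EReal) :=
          mul_le_mul_of_nonneg_left hlog h0T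
      _ = ((1 / T * ((n : ℝ) * L) : ℝ) : EReal) := (EReal.coe_mul _ _).symm
      _ ≤ ((-(c+1) : ℝ) : EReal) := by
          rw [EReal.coe_le_coe_iff]
          have h1 : (n:ℝ) * L ≤ (M * T) * L :=
            mul_le_mul_of_nonpos_right hMT.le (by linarith)
          have h2 : 1 / T * ((n:ℝ) * L) ≤ 1 / T * ((M * T) * L) :=
            mul_le_mul_of_nonneg_left h1 (by positivity)
          have h3 : 1 / T * ((M * T) * L) = M * L := by field_simp
          nlinarith [hMpos]
  refine lt_of_le_of_lt (limsup_le_of_le (by isBoundedDefault) hev) ?_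
  exact EReal.coe_lt_coe_iff.2 (by linarith)
end

section
/- For every t ∈ (0, 1] and every ε > 0, lim_{T→∞} P(η(N_{tT}) > εT) = 0, where N_{tT} is a Poisson random variable with mean αtT independent of the chain η (a fixed-time law-of-large-numbers statement: the scaled process η(N_{tT})/T converges to 0 in probability). -/
open MeasureTheory ProbabilityTheory Filter
open scoped ENNReal

section Aux

variable {Ω : Type*} [MeasureSpace Ω]

lemma tsum_indicator_part {ι : Type*} {A : ι → Set Ω}
    (hdis : ∀ i j, i ≠ j → Disjoint (A i) (A j)) {idx : Ω → ι}
    (hidx : ∀ ω, ω ∈ A (idx ω)) (c : ι → ℝ≥0∞) (ω : Ω) :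
    ∑' i, (A i).indicator (fun _ => c i) ω = c (idx ω) := by
  rw [tsum_eq_single (idx ω) ?_]
  · exact Set.indicator_of_mem (hidx ω) _
  · intro i hi
    have h : ω ∉ A i := fun h => (Set.disjoint_left.mp (hdis i (idx ω) hi) h) (hidx ω)
    exact Set.indicator_of_notMem h _

lemma lintegral_nat_eq (X : Ω → ℕ) (hX : Measurable X) :
    ∫⁻ ω, (X ω : ℝ≥0∞) ∂ℙ = ∑' n : ℕ, (n : ℝ≥0∞) * ℙ {ω | X ω = n} := by
  have hpt : ∀ ω, (X ω : ℝ≥0∞) =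
      ∑' n : ℕ, ({ω | X ω = n}).indicator (fun _ => (n : ℝ≥0∞)) ω := by
    intro ω
    rw [tsum_indicator_part (A := fun n => {ω | X ω = n})
      (fun i j hij => Set.disjoint_left.2 fun ω' h1 h2 => hij (h1.symm.trans h2))
      (idx := X) (fun ω' => rfl) _ ω]
  rw [lintegral_congr hpt, lintegral_tsum
    (f := fun n ω => ({ω' | X ω' = n}).indicator (fun _ => (n : ℝ≥0∞)) ω)
    (fun n => (measurable_const.indicator
      (show MeasurableSet {ω' | X ω' = n} from hX (measurableSet_singleton n))).aemeasurable)]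
  exact tsum_congr fun n => by
    rw [lintegral_indicator (show MeasurableSet {ω' | X ω' = n} from
      hX (measurableSet_singleton n)), setLIntegral_const]

lemma transP_nonneg (lam mu : ℝ) (hlam : 0 < lam) (hmu : 0 < mu) (i j : ℕ) :
    0 ≤ transP lam mu i j := by
  unfold transP
  split_ifs <;> positivity

lemma transP_moment (lam mu : ℝ) (hlam : 0 < lam) (hmu : 0 < mu) (i : ℕ) :
    ∑' j : ℕ, (j : ℝ≥0∞) * ENNReal.ofReal (transP lam mu i j) ≤
      ENNReal.ofReal ((lam + mu / 2) / (lam + mu)) * (i : ℝ≥0∞) + 1 := by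
  have hlm : 0 < lam + mu := by linarith
  rcases Nat.eq_zero_or_pos i with hi | hi
  · subst hi
    rw [tsum_eq_single 1 ?_]
    · simp [transP]
    · intro j hj
      simp [transP, hj]
  · -- i ≥ 1
    have hine : i ≠ 0 := hi.ne'
    have hsum : ∑' j : ℕ, (j : ℝ≥0∞) * ENNReal.ofReal (transP lam mu i j)
        = ∑ j ∈ Finset.range (i + 2), (j : ℝ≥0∞) * ENNReal.ofReal (transP lam mu i j) := by
      apply tsum_eq_sum
      intro j hj
      have hj2 : i + 2 ≤ j := Nat.le_of_not_lt (by simpa using hj)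
      have h1 : ¬ (j < i) := by omega
      have h2 : j ≠ i + 1 := by omega
      simp [transP, hine, h1, h2]
    rw [hsum]
    have hterm : ∀ j ∈ Finset.range (i + 2), (j : ℝ≥0∞) * ENNReal.ofReal (transP lam mu i j)
        = ENNReal.ofReal ((j : ℝ) * transP lam mu i j) := by
      intro j _
      rw [ENNReal.ofReal_mul (by positivity), ENNReal.ofReal_natCast]
    rw [Finset.sum_congr rfl hterm,
      ← ENNReal.ofReal_sum_of_nonneg (fun j _ => by
        have := transP_nonneg lam mu hlam hmu i j; positivity)]
    have hR : ENNReal.ofReal ((lam + mu / 2) / (lam + mu)) * (i : ℝ≥0∞) + 1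
        = ENNReal.ofReal ((lam + mu / 2) / (lam + mu) * i + 1) := by
      rw [ENNReal.ofReal_add (by positivity) zero_le_one, ENNReal.ofReal_one,
        ENNReal.ofReal_mul (by positivity), ENNReal.ofReal_natCast]
    rw [hR]
    apply ENNReal.ofReal_le_ofReal
    -- real inequality
    have hS : ∑ j ∈ Finset.range (i + 2), (j : ℝ) * transP lam mu i j
        = (∑ j ∈ Finset.range i, (j : ℝ)) * (mu / (i * (lam + mu)))
          + ((i : ℝ) + 1) * (lam / (lam + mu)) := by
      rw [Finset.sum_range_succ, Finset.sum_range_succ]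
      have e1 : transP lam mu i (i + 1) = lam / (lam + mu) := by simp [transP, hine]
      have e2 : transP lam mu i i = 0 := by simp [transP, hine]
      have e3 : ∀ j ∈ Finset.range i, (j : ℝ) * transP lam mu i j
          = (j : ℝ) * (mu / (i * (lam + mu))) := by
        intro j hj
        have hji : j < i := Finset.mem_range.mp hj
        have : j ≠ i + 1 := by omega
        simp [transP, hine, this, hji]
      rw [Finset.sum_congr rfl e3, e1, e2, ← Finset.sum_mul]
      push_cast
      ring
    rw [hS]
    have hgauss : (∑ j ∈ Finset.range i, (j : ℝ)) = (i : ℝ) * ((i : ℝ) - 1) / 2 := by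
      have h2 := Finset.sum_range_id_mul_two i
      have : ((∑ j ∈ Finset.range i, j : ℕ) : ℝ) * 2 = (i : ℝ) * ((i : ℝ) - 1) := by
        rw [← Nat.cast_ofNat (n := 2), ← Nat.cast_mul, h2]
        push_cast [Nat.cast_sub hi]
        ring
      push_cast at this ⊢
      linarith
    rw [hgauss]
    have hii : (1 : ℝ) ≤ (i : ℝ) := by exact_mod_cast hi
    have hip : (0 : ℝ) < (i : ℝ) := by linarith
    have key : (i : ℝ) * ((i : ℝ) - 1) / 2 * (mu / ((i : ℝ) * (lam + mu)))
        = ((i : ℝ) - 1) * mu / (2 * (lam + mu)) := by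
      field_simp
    rw [key]
    have eq : (lam + mu / 2) / (lam + mu) * (i : ℝ) + 1
        - (((i : ℝ) - 1) * mu / (2 * (lam + mu)) + ((i : ℝ) + 1) * (lam / (lam + mu)))
        = (3 * mu / 2) / (lam + mu) := by
      field_simp
      ring
    have hpos : (0 : ℝ) < (3 * mu / 2) / (lam + mu) := by positivity
    linarith

lemma chain_step [IsProbabilityMeasure (ℙ : Measure Ω)]
    (lam mu : ℝ) (hlam : 0 < lam) (hmu : 0 < mu)
    (eta : Ω → ℕ → ℕ) (hEta : IsCatastropheChain lam mu eta) (k : ℕ) :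
    ∫⁻ ω, (eta ω (k + 1) : ℝ≥0∞) ∂ℙ ≤
      ENNReal.ofReal ((lam + mu / 2) / (lam + mu)) * ∫⁻ ω, (eta ω k : ℝ≥0∞) ∂ℙ + 1 := by
  obtain ⟨hmeas, h0, hstep⟩ := hEta
  set c : ℝ≥0∞ := ENNReal.ofReal ((lam + mu / 2) / (lam + mu)) with hc
  set ef : (Fin (k + 1) → ℕ) → ℕ → ℕ :=
    fun v l => if h : l < k + 1 then v ⟨l, h⟩ else 0 with hef
  set A : (Fin (k + 1) → ℕ) → Set Ω :=
    fun v => {ω | ∀ l ≤ k, eta ω l = ef v l} with hA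
  have hAmeas : ∀ v, MeasurableSet (A v) := by
    intro v
    have : A v = ⋂ (l : ℕ) (_ : l ≤ k), (fun ω => eta ω l) ⁻¹' {ef v l} := by
      ext ω; simp [hA, Set.mem_iInter]
    rw [this]
    exact MeasurableSet.iInter fun l => MeasurableSet.iInter fun _ =>
      (hmeas l) (measurableSet_singleton _)
  have hdis : ∀ v w, v ≠ w → Disjoint (A v) (A w) := by
    intro v w hvw
    rw [Set.disjoint_left]
    intro ω hv hw
    apply hvw
    funext i
    have h1 := hv i.1 (Nat.lt_succ_iff.mp i.2)
    have h2 := hw i.1 (Nat.lt_succ_iff.mp i.2)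
    have e1 : ef v i.1 = v i := by simp only [hef]; rw [dif_pos i.2]
    have e2 : ef w i.1 = w i := by simp only [hef]; rw [dif_pos i.2]
    rw [e1] at h1; rw [e2] at h2
    rw [← h1, ← h2]
  set idxf : Ω → (Fin (k + 1) → ℕ) := fun ω i => eta ω i.1 with hidxf
  have hidx : ∀ ω, ω ∈ A (idxf ω) := by
    intro ω l hl
    simp only [hef]
    rw [dif_pos (Nat.lt_succ_of_le hl)]
  have hone : ∑' v, ℙ (A v) = 1 := by
    rw [← measure_iUnion (fun v w hvw => hdis v w hvw) hAmeas]
    have : ⋃ v, A v = Set.univ := by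
      ext ω
      simp only [Set.mem_univ, iff_true, Set.mem_iUnion]
      exact ⟨idxf ω, hidx ω⟩
    rw [this, measure_univ]
  have key : ∀ cf : (Fin (k + 1) → ℕ) → ℝ≥0∞,
      ∫⁻ ω, cf (idxf ω) ∂ℙ = ∑' v, cf v * ℙ (A v) := by
    intro cf
    have hpt : ∀ ω, cf (idxf ω) =
        ∑' v, (A v).indicator (fun _ => cf v) ω :=
      fun ω => (tsum_indicator_part hdis hidx cf ω).symm
    rw [lintegral_congr hpt, lintegral_tsum
      (fun v => (measurable_const.indicator (hAmeas v)).aemeasurable)]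
    exact tsum_congr fun v => by
      rw [lintegral_indicator (hAmeas v), setLIntegral_const]
  have hEk : ∫⁻ ω, (eta ω k : ℝ≥0∞) ∂ℙ = ∑' v, ((ef v k : ℕ) : ℝ≥0∞) * ℙ (A v) := by
    rw [← key fun v => ((ef v k : ℕ) : ℝ≥0∞)]
    apply lintegral_congr; intro ω
    congr 1
    simp [hef]
    rfl
  have hPj : ∀ j, ℙ {ω | eta ω (k + 1) = j}
      = ∑' v, ENNReal.ofReal (transP lam mu (ef v k) j) * ℙ (A v) := by
    intro j
    have hset : {ω | eta ω (k + 1) = j} = ⋃ v, ({ω | eta ω (k + 1) = j} ∩ A v) := by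
      ext ω
      constructor
      · intro h; exact Set.mem_iUnion.2 ⟨idxf ω, h, hidx ω⟩
      · intro h
        obtain ⟨v, hv, -⟩ := Set.mem_iUnion.1 h
        exact hv
    rw [hset, measure_iUnion
      (fun v w hvw => ((hdis v w hvw).mono Set.inter_subset_right Set.inter_subset_right))
      (fun v => (show MeasurableSet {ω | eta ω (k + 1) = j} from
        (hmeas (k + 1)) (measurableSet_singleton j)).inter (hAmeas v))]
    apply tsum_congr; intro v
    have hseteq : {ω | eta ω (k + 1) = j} ∩ A v
        = {ω | eta ω (k + 1) = j ∧ ∀ l ≤ k, eta ω l = ef v l} := rfl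
    rw [hseteq, hstep k (ef v) j]
  calc ∫⁻ ω, (eta ω (k + 1) : ℝ≥0∞) ∂ℙ
      = ∑' j : ℕ, (j : ℝ≥0∞) * ℙ {ω | eta ω (k + 1) = j} :=
        lintegral_nat_eq _ (hmeas (k + 1))
    _ = ∑' j : ℕ, ∑' v, (j : ℝ≥0∞) * (ENNReal.ofReal (transP lam mu (ef v k) j) * ℙ (A v)) := by
        exact tsum_congr fun j => by rw [hPj j, ENNReal.tsum_mul_left]
    _ = ∑' v, ∑' j : ℕ, (j : ℝ≥0∞) * (ENNReal.ofReal (transP lam mu (ef v k) j) * ℙ (A v)) :=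
        ENNReal.tsum_comm
    _ = ∑' v, (∑' j : ℕ, (j : ℝ≥0∞) * ENNReal.ofReal (transP lam mu (ef v k) j)) * ℙ (A v) := by
        refine tsum_congr fun v => ?_
        rw [← ENNReal.tsum_mul_right]
        exact tsum_congr fun j => (mul_assoc _ _ _).symm
    _ ≤ ∑' v, (c * ((ef v k : ℕ) : ℝ≥0∞) + 1) * ℙ (A v) := by
        refine ENNReal.tsum_le_tsum fun v => ?_
        exact mul_le_mul_left (transP_moment lam mu hlam hmu (ef v k)) _
    _ = c * ∑' v, ((ef v k : ℕ) : ℝ≥0∞) * ℙ (A v) + ∑' v, ℙ (A v) := by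
        rw [← ENNReal.tsum_mul_left, ← ENNReal.tsum_add]
        refine tsum_congr fun v => ?_
        rw [add_mul, one_mul, mul_assoc]
    _ = c * ∫⁻ ω, (eta ω k : ℝ≥0∞) ∂ℙ + 1 := by rw [hEk, hone]

lemma chain_bound [IsProbabilityMeasure (ℙ : Measure Ω)]
    (lam mu : ℝ) (hlam : 0 < lam) (hmu : 0 < mu)
    (eta : Ω → ℕ → ℕ) (hEta : IsCatastropheChain lam mu eta) (k : ℕ) :
    ∫⁻ ω, (eta ω k : ℝ≥0∞) ∂ℙ ≤ ENNReal.ofReal (2 * (lam + mu) / mu) := by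
  have hlm : 0 < lam + mu := by linarith
  induction k with
  | zero =>
    have hm : MeasurableSet {ω | eta ω 0 = 0} :=
      (hEta.1 0) (measurableSet_singleton 0)
    have h0 : ∀ᵐ ω ∂(ℙ : Measure Ω), eta ω 0 = 0 := by
      rw [ae_iff]
      have : {ω | ¬ eta ω 0 = 0} = {ω | eta ω 0 = 0}ᶜ := rfl
      rw [this, prob_compl_eq_zero_iff hm]
      exact hEta.2.1
    have hz : ∫⁻ ω, (eta ω 0 : ℝ≥0∞) ∂ℙ = 0 := by
      rw [← lintegral_zero]
      apply lintegral_congr_ae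
      filter_upwards [h0] with ω hω
      rw [hω]; simp
    rw [hz]; exact zero_le
  | succ k ih =>
    calc ∫⁻ ω, (eta ω (k + 1) : ℝ≥0∞) ∂ℙ
        ≤ ENNReal.ofReal ((lam + mu / 2) / (lam + mu)) * ∫⁻ ω, (eta ω k : ℝ≥0∞) ∂ℙ + 1 :=
          chain_step lam mu hlam hmu eta hEta k
      _ ≤ ENNReal.ofReal ((lam + mu / 2) / (lam + mu)) * ENNReal.ofReal (2 * (lam + mu) / mu)
            + 1 := add_le_add_left (mul_le_mul_right ih _) 1
      _ = ENNReal.ofReal (2 * (lam + mu) / mu) := by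
          rw [← ENNReal.ofReal_mul (by positivity), ← ENNReal.ofReal_one,
            ← ENNReal.ofReal_add (by positivity) zero_le_one]
          congr 1
          field_simp
          ring

end Aux

theorem lln_population_catastrophes
    {Ω : Type*} [MeasureSpace Ω] [IsProbabilityMeasure (ℙ : Measure Ω)]
    (lam mu alpha : ℝ) (hlam : 0 < lam) (hmu : 0 < mu) (halpha : 0 < alpha)
    (eta : Ω → ℕ → ℕ) (hEta : IsCatastropheChain lam mu eta)
    (t : ℝ) (ht : t ∈ Set.Ioc (0 : ℝ) 1)
    (N : ℝ → Ω → ℕ)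
    (hN : ∀ T > (0 : ℝ), IsPoissonRV (alpha * (t * T)) (N T))
    (hInd : ∀ T > (0 : ℝ), IndepFun (N T) eta ℙ)
    (ε : ℝ) (hε : 0 < ε) :
    Filter.Tendsto (fun T : ℝ => ℙ {ω | ε * T < (eta ω (N T ω) : ℝ)})
      Filter.atTop (nhds 0) := by
  have hmeas := hEta.1
  set C : ℝ≥0∞ := ENNReal.ofReal (2 * (lam + mu) / mu) with hC
  have hbdd : ∀ T : ℝ, 1 ≤ T →
      ℙ {ω | ε * T < (eta ω (N T ω) : ℝ)} ≤ C / ENNReal.ofReal (ε * T) := by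
    intro T hT
    have hT0 : (0 : ℝ) < T := lt_of_lt_of_le one_pos hT
    obtain ⟨hNm, hNd⟩ := hN T hT0
    have hIndT := hInd T hT0
    -- measurability
    have hf : Measurable fun ω => ((eta ω (N T ω) : ℕ) : ℝ≥0∞) := by
      have h1 : Measurable fun p : Ω × ℕ => ((eta p.1 p.2 : ℕ) : ℝ≥0∞) :=
        measurable_from_prod_countable_left fun n =>
          (Measurable.of_discrete (f := fun m : ℕ => (m : ℝ≥0∞))).comp (hmeas n)
      exact h1.comp (measurable_id.prodMk hNm)
    -- integral bound
    have hint : ∫⁻ ω, ((eta ω (N T ω) : ℕ) : ℝ≥0∞) ∂ℙ ≤ C := by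
      have hpt : ∀ ω, ((eta ω (N T ω) : ℕ) : ℝ≥0∞)
          = ∑' k : ℕ, (if N T ω = k then (1 : ℝ≥0∞) else 0) * ((eta ω k : ℕ) : ℝ≥0∞) := by
        intro ω
        rw [tsum_eq_single (N T ω) ?_]
        · simp
        · intro k hk
          rw [if_neg (fun h => hk h.symm), zero_mul]
      have hterm : ∀ k : ℕ, ∫⁻ ω, (if N T ω = k then (1 : ℝ≥0∞) else 0)
            * ((eta ω k : ℕ) : ℝ≥0∞) ∂ℙ
          = ℙ {ω | N T ω = k} * ∫⁻ ω, ((eta ω k : ℕ) : ℝ≥0∞) ∂ℙ := by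
        intro k
        have φm : Measurable fun n : ℕ => (if n = k then (1 : ℝ≥0∞) else 0) :=
          Measurable.of_discrete
        have ψm : Measurable fun g : ℕ → ℕ => ((g k : ℕ) : ℝ≥0∞) :=
          (Measurable.of_discrete (f := fun m : ℕ => (m : ℝ≥0∞))).comp (measurable_pi_apply k)
        have hind2 : IndepFun (fun ω => if N T ω = k then (1 : ℝ≥0∞) else 0)
            (fun ω => ((eta ω k : ℕ) : ℝ≥0∞)) ℙ := hIndT.comp φm ψm
        have hmul := lintegral_mul_eq_lintegral_mul_lintegral_of_indepFun
          (φm.comp hNm) (ψm.comp (measurable_pi_lambda eta fun k => hmeas k)) hind2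
        have hfst : ∫⁻ ω, (if N T ω = k then (1 : ℝ≥0∞) else 0) ∂ℙ = ℙ {ω | N T ω = k} := by
          have : (fun ω => (if N T ω = k then (1 : ℝ≥0∞) else 0))
              = Set.indicator {ω | N T ω = k} (fun _ => 1) := by
            funext ω
            rw [Set.indicator_apply]
            rfl
          rw [this, lintegral_indicator (show MeasurableSet {ω | N T ω = k} from
            hNm (measurableSet_singleton k)), setLIntegral_const, one_mul]
        calc ∫⁻ ω, (if N T ω = k then (1 : ℝ≥0∞) else 0) * ((eta ω k : ℕ) : ℝ≥0∞) ∂ℙ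
            = ∫⁻ ω, ((fun ω => if N T ω = k then (1 : ℝ≥0∞) else 0)
                * fun ω => ((eta ω k : ℕ) : ℝ≥0∞)) ω ∂ℙ := rfl
          _ = (∫⁻ ω, (if N T ω = k then (1 : ℝ≥0∞) else 0) ∂ℙ)
                * ∫⁻ ω, ((eta ω k : ℕ) : ℝ≥0∞) ∂ℙ := hmul
          _ = ℙ {ω | N T ω = k} * ∫⁻ ω, ((eta ω k : ℕ) : ℝ≥0∞) ∂ℙ := by rw [hfst]
      have hNsum : ∑' k : ℕ, ℙ {ω | N T ω = k} = 1 := by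
        rw [← measure_iUnion (fun k l hkl => Set.disjoint_left.2
            fun ω h1 h2 => hkl (h1.symm.trans h2))
          (fun k => show MeasurableSet {ω | N T ω = k} from hNm (measurableSet_singleton k))]
        have : ⋃ k, {ω | N T ω = k} = Set.univ := by
          ext ω; simp only [Set.mem_univ, iff_true, Set.mem_iUnion]
          exact ⟨N T ω, rfl⟩
        rw [this, measure_univ]
      calc ∫⁻ ω, ((eta ω (N T ω) : ℕ) : ℝ≥0∞) ∂ℙ
          = ∑' k : ℕ, ∫⁻ ω, (if N T ω = k then (1 : ℝ≥0∞) else 0)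
              * ((eta ω k : ℕ) : ℝ≥0∞) ∂ℙ := by
            rw [lintegral_congr hpt]
            exact lintegral_tsum fun k =>
              ((Measurable.of_discrete (f := fun n : ℕ => if n = k then (1 : ℝ≥0∞) else 0)).comp
                hNm |>.mul ((Measurable.of_discrete (f := fun m : ℕ =>
                  (m : ℝ≥0∞))).comp (hmeas k))).aemeasurable
        _ = ∑' k : ℕ, ℙ {ω | N T ω = k} * ∫⁻ ω, ((eta ω k : ℕ) : ℝ≥0∞) ∂ℙ :=
            tsum_congr hterm
        _ ≤ ∑' k : ℕ, ℙ {ω | N T ω = k} * C :=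
            ENNReal.tsum_le_tsum fun k =>
              mul_le_mul_right (chain_bound lam mu hlam hmu eta hEta k) _
        _ = (∑' k : ℕ, ℙ {ω | N T ω = k}) * C := ENNReal.tsum_mul_right
        _ = C := by rw [hNsum, one_mul]
    -- Markov
    have hεT : (0 : ℝ) < ε * T := mul_pos hε hT0
    have hsub : {ω | ε * T < (eta ω (N T ω) : ℝ)}
        ⊆ {ω | ENNReal.ofReal (ε * T) ≤ ((eta ω (N T ω) : ℕ) : ℝ≥0∞)} := by
      intro ω hω
      calc ENNReal.ofReal (ε * T) ≤ ENNReal.ofReal ((eta ω (N T ω) : ℝ)) :=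
            ENNReal.ofReal_le_ofReal hω.le
        _ = ((eta ω (N T ω) : ℕ) : ℝ≥0∞) := ENNReal.ofReal_natCast _
    have hmark := mul_meas_ge_le_lintegral₀ (μ := (ℙ : Measure Ω)) hf.aemeasurable (ENNReal.ofReal (ε * T))
    rw [ENNReal.le_div_iff_mul_le
      (Or.inl (by simp [ENNReal.ofReal_eq_zero, not_le, hεT]))
      (Or.inl ENNReal.ofReal_ne_top)]
    calc ℙ {ω | ε * T < (eta ω (N T ω) : ℝ)} * ENNReal.ofReal (ε * T)
        ≤ ℙ {ω | ENNReal.ofReal (ε * T) ≤ ((eta ω (N T ω) : ℕ) : ℝ≥0∞)}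
            * ENNReal.ofReal (ε * T) := mul_le_mul_left (measure_mono hsub) _
      _ = ENNReal.ofReal (ε * T)
            * ℙ {ω | ENNReal.ofReal (ε * T) ≤ ((eta ω (N T ω) : ℕ) : ℝ≥0∞)} := mul_comm _ _
      _ ≤ ∫⁻ ω, ((eta ω (N T ω) : ℕ) : ℝ≥0∞) ∂ℙ := hmark
      _ ≤ C := hint
  -- limit of the bound
  have hlim : Tendsto (fun T : ℝ => C / ENNReal.ofReal (ε * T)) atTop (nhds 0) := by
    have h1 : Tendsto (fun T : ℝ => (2 * (lam + mu) / mu) / (ε * T)) atTop (nhds 0) :=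
      tendsto_const_nhds.div_atTop (Tendsto.const_mul_atTop hε tendsto_id)
    have h2 := ENNReal.tendsto_ofReal h1
    rw [ENNReal.ofReal_zero] at h2
    apply h2.congr'
    filter_upwards [eventually_ge_atTop (1 : ℝ)] with T hT
    rw [ENNReal.ofReal_div_of_pos (mul_pos hε (lt_of_lt_of_le one_pos hT))]
  apply tendsto_of_tendsto_of_tendsto_of_le_of_le' tendsto_const_nhds hlim
  · exact Eventually.of_forall fun T => zero_le
  · filter_upwards [eventually_ge_atTop (1 : ℝ)] with T hT
    exact hbdd T hT
end

section
/- Fix λ, μ, α > 0 and define I : ℝ → [0,∞] by I(x) = ∞ for x < 0, I(x) = x·ln((λ+μ)/λ) for 0 ≤ x < α, and I(x) = x·ln(x(λ+μ)/(αλ)) − x + α for x ≥ α. Then for every x > 0, sup_{z ∈ (0,1)} sup_{y ≥ x} ( −y·ln( y(λ+μ)/(αλz) ) + y − αz ) = −I(x). -/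
lemma key_log (a b : ℝ) (ha : 0 < a) (hb : 0 < b) :
    a * Real.log (b / a) ≤ b - a := by
  have h := Real.log_le_sub_one_of_pos (div_pos hb ha)
  have h2 := mul_le_mul_of_nonneg_left h ha.le
  have h3 : a * (b / a - 1) = b - a := by field_simp
  linarith

theorem variational_formula_rate_function
    (lam mu alpha : ℝ) (hlam : 0 < lam) (hmu : 0 < mu) (halpha : 0 < alpha)
    (x : ℝ) (hx : 0 < x) :
    (⨆ z ∈ Set.Ioo (0 : ℝ) 1, ⨆ y ∈ Set.Ici x,
        ((-(y * Real.log (y * (lam + mu) / (alpha * lam * z))) + y - alpha * z : ℝ) : EReal))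
      = - rateI lam mu alpha x := by
  have hL : (0:ℝ) < lam + mu := by linarith
  have hal : (0:ℝ) < alpha * lam := mul_pos halpha hlam
  have hx0 : ¬ x < 0 := not_lt.2 hx.le
  rcases lt_or_ge x alpha with hxa | hxa
  · -- case x < alpha
    have hrate : rateI lam mu alpha x = ((x * Real.log ((lam + mu) / lam) : ℝ) : EReal) := by
      simp [rateI, hx0, hxa]
    rw [hrate, ← EReal.coe_neg]
    have hAnn : 0 ≤ Real.log ((lam + mu) / lam) :=
      Real.log_nonneg (by rw [le_div_iff₀ hlam]; linarith)
    apply le_antisymm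
    · apply iSup₂_le; intro z hz; apply iSup₂_le; intro y hy
      rw [EReal.coe_le_coe_iff]
      obtain ⟨hz0, hz1⟩ := hz
      have hy0 : 0 < y := lt_of_lt_of_le hx hy
      have hk := key_log y (alpha * z) hy0 (by positivity)
      have hlog : Real.log (y * (lam + mu) / (alpha * lam * z))
          = Real.log ((lam + mu) / lam) - Real.log (alpha * z / y) := by
        rw [← Real.log_div (by positivity) (by positivity)]
        congr 1
        field_simp
      rw [hlog]
      linarith [mul_nonneg (sub_nonneg.2 hy) hAnn]
    · have hzmem : x / alpha ∈ Set.Ioo (0:ℝ) 1 :=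
        ⟨by positivity, (div_lt_one halpha).2 hxa⟩
      apply le_iSup₂_of_le (x / alpha) hzmem
      apply le_iSup₂_of_le x Set.self_mem_Ici
      rw [EReal.coe_le_coe_iff]
      have hxne : x ≠ 0 := hx.ne'
      have hane : alpha ≠ 0 := halpha.ne'
      have hlne : lam ≠ 0 := hlam.ne'
      have h1 : x * (lam + mu) / (alpha * lam * (x / alpha)) = (lam + mu) / lam := by
        field_simp
      have h2 : alpha * (x / alpha) = x := by field_simp
      rw [h1, h2]
      linarith
  · -- case alpha ≤ x
    have hrate : rateI lam mu alpha x
        = ((x * Real.log (x * (lam + mu) / (alpha * lam)) - x + alpha : ℝ) : EReal) := by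
      simp [rateI, hx0, not_lt.2 hxa]
    rw [hrate, ← EReal.coe_neg]
    have hAnn : 0 ≤ Real.log (x * (lam + mu) / (alpha * lam)) := by
      apply Real.log_nonneg
      rw [le_div_iff₀ hal]
      nlinarith
    apply le_antisymm
    · apply iSup₂_le; intro z hz; apply iSup₂_le; intro y hy
      rw [EReal.coe_le_coe_iff]
      obtain ⟨hz0, hz1⟩ := hz
      have hy0 : 0 < y := lt_of_lt_of_le hx hy
      have hk := key_log y (x * z) hy0 (by positivity)
      have hlog : Real.log (y * (lam + mu) / (alpha * lam * z))
          = Real.log (x * (lam + mu) / (alpha * lam)) - Real.log (x * z / y) := by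
        rw [← Real.log_div (by positivity) (by positivity)]
        congr 1
        field_simp
      rw [hlog]
      linarith [mul_nonneg (sub_nonneg.2 hy) hAnn,
        mul_nonneg (sub_nonneg.2 hxa) (sub_nonneg.2 hz1.le)]
    · -- lower bound via limit z → 1⁻ with y = x
      have hcA : ContinuousAt (fun z : ℝ => x * (lam + mu) / (alpha * lam * z)) 1 := by
        apply ContinuousAt.div continuousAt_const
        · exact continuousAt_const.mul continuousAt_id
        · simp [hal.ne']
      have hargpos : (0:ℝ) < x * (lam + mu) / (alpha * lam * 1) := by
        rw [mul_one]; positivity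
      have hclog : ContinuousAt (fun z : ℝ => Real.log (x * (lam + mu) / (alpha * lam * z))) 1 :=
        ContinuousAt.log hcA hargpos.ne'
      have hcg : ContinuousAt
          (fun z : ℝ => -(x * Real.log (x * (lam + mu) / (alpha * lam * z))) + x - alpha * z) 1 :=
        (((continuousAt_const.mul hclog).neg).add continuousAt_const).sub
          (continuousAt_const.mul continuousAt_id)
      have hval : -(x * Real.log (x * (lam + mu) / (alpha * lam * 1))) + x - alpha * 1
          = -(x * Real.log (x * (lam + mu) / (alpha * lam)) - x + alpha) := by
        rw [mul_one, mul_one]; ring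
      have htd : Filter.Tendsto
          (fun z : ℝ => ((-(x * Real.log (x * (lam + mu) / (alpha * lam * z))) + x - alpha * z
            : ℝ) : EReal))
          (nhdsWithin 1 (Set.Iio 1))
          (nhds ((-(x * Real.log (x * (lam + mu) / (alpha * lam))) + x - alpha : ℝ) : EReal)) := by
        rw [EReal.tendsto_coe]
        have hval' : -(x * Real.log (x * (lam + mu) / (alpha * lam * 1))) + x - alpha * 1
            = -(x * Real.log (x * (lam + mu) / (alpha * lam))) + x - alpha := by
          rw [mul_one, mul_one]
        rw [← hval']
        exact (hcg.tendsto).mono_left nhdsWithin_le_nhds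
      rw [show (-(x * Real.log (x * (lam + mu) / (alpha * lam)) - x + alpha))
          = -(x * Real.log (x * (lam + mu) / (alpha * lam))) + x - alpha from by ring]
      apply le_of_tendsto htd
      have hmem : Set.Ioo (0:ℝ) 1 ∈ nhdsWithin (1:ℝ) (Set.Iio 1) :=
        Ioo_mem_nhdsLT_of_mem (by constructor <;> norm_num)
      filter_upwards [hmem] with z hz
      exact le_iSup₂_of_le z hz (le_iSup₂_of_le x Set.self_mem_Ici (le_refl _))
end

section
/- Fix m > 0 and for each T > 0 let N_T be a Poisson random variable with mean mT. Then for every x with 0 < x ≤ m, lim_{T→∞} (1/T) ln P(N_T ≤ xT) = −( x·ln(x/m) − x + m ). -/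
open MeasureTheory ProbabilityTheory Filter

lemma stirling_err : Tendsto (fun n : ℕ => (Real.log (Nat.factorial n) - ((n:ℝ) * Real.log n - n)) / n) atTop (nhds 0) := by
  have heq : ∀ᶠ n : ℕ in atTop, (Real.log (Nat.factorial n) - ((n:ℝ) * Real.log n - n)) / n
      = Real.log (Stirling.stirlingSeq n) * (1/(n:ℝ)) + (Real.log (2*n) / (2*n)) := by
    filter_upwards [eventually_ge_atTop 1] with n hn
    have hn0 : (0:ℝ) < n := by exact_mod_cast hn
    have h := Stirling.log_stirlingSeq_formula n
    have hne : Real.log ((n:ℝ) / Real.exp 1) = Real.log n - 1 := by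
      rw [Real.log_div (ne_of_gt hn0) (Real.exp_ne_zero 1), Real.log_exp]
    rw [hne] at h
    have : Real.log (Nat.factorial n) - ((n:ℝ) * Real.log n - n)
        = Real.log (Stirling.stirlingSeq n) + 1/2 * Real.log (2*n) := by
      rw [h]; ring
    rw [this]
    field_simp
  rw [tendsto_congr' heq]
  have h1 : Tendsto (fun n : ℕ => Real.log (Stirling.stirlingSeq n) * (1/(n:ℝ))) atTop (nhds 0) := by
    have := (Real.continuousAt_log (by positivity : Real.sqrt Real.pi ≠ 0)).tendsto.comp
      Stirling.tendsto_stirlingSeq_sqrt_pi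
    simpa using this.mul (tendsto_one_div_atTop_nhds_zero_nat)
  have h2 : Tendsto (fun n : ℕ => (Real.log (2*n) / (2*n))) atTop (nhds 0) := by
    have hl : Tendsto (fun y : ℝ => Real.log y / y) atTop (nhds 0) :=
      Real.isLittleO_log_id_atTop.tendsto_div_nhds_zero
    have hc : Tendsto (fun n : ℕ => 2*(n:ℝ)) atTop atTop :=
      (tendsto_natCast_atTop_atTop).const_mul_atTop two_pos
    exact (hl.comp hc)
  simpa using h1.add h2

lemma poisson_cdf {Ω : Type*} [MeasureSpace Ω] (μ : ℝ) (N : Ω → ℕ)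
    (h : Measurable N ∧ ∀ k : ℕ, ℙ {ω | N ω = k} = ENNReal.ofReal (Real.exp (-μ) * μ ^ k / (Nat.factorial k)))
    (n : ℕ) (hμ : 0 ≤ μ) :
    (ℙ {ω | N ω ≤ n}).toReal = ∑ k ∈ Finset.range (n+1), Real.exp (-μ) * μ ^ k / (Nat.factorial k) := by
  have hset : {ω | N ω ≤ n} = ⋃ k ∈ Finset.range (n+1), {ω | N ω = k} := by
    ext ω; simp [Nat.lt_succ_iff]
  rw [hset, measure_biUnion_finset]
  · rw [ENNReal.toReal_sum (fun k _ => by rw [h.2 k]; exact ENNReal.ofReal_ne_top)]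
    refine Finset.sum_congr rfl fun k _ => ?_
    rw [(h.2 k), ENNReal.toReal_ofReal (by positivity)]
  · intro i _ j _ hij
    simp only [Set.disjoint_left]
    intro ω hi hj
    exact hij (hi.symm.trans hj)
  · intro k _; exact h.1 (measurableSet_singleton k)

lemma term_mono (μ : ℝ) (hμ : 0 < μ) :
    ∀ k n : ℕ, k ≤ n → (n:ℝ) ≤ μ → μ^k / (Nat.factorial k) ≤ μ^n / (Nat.factorial n) := by
  intro k n hkn
  induction n, hkn using Nat.le_induction with
  | base => intro _; exact le_rfl
  | succ j hkj ih =>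
    intro hj1
    have hj : (j:ℝ) ≤ μ := le_trans (by push_cast; linarith) hj1
    refine le_trans (ih hj) ?_
    rw [pow_succ, Nat.factorial_succ]
    push_cast
    rw [div_le_div_iff₀ (by positivity) (by positivity)]
    have hfj : (0:ℝ) < (Nat.factorial j : ℝ) := by positivity
    have : (j:ℝ)+1 ≤ μ := by push_cast at hj1 ⊢; linarith
    nlinarith [mul_nonneg (mul_nonneg (sub_nonneg.mpr this) (le_of_lt (pow_pos hμ j))) (le_of_lt hfj)]

lemma sum_bounds (μ : ℝ) (hμ : 0 < μ) (n : ℕ) (hn : (n:ℝ) ≤ μ) :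
    μ^n / (Nat.factorial n) ≤ ∑ k ∈ Finset.range (n+1), μ^k / (Nat.factorial k) ∧
    ∑ k ∈ Finset.range (n+1), μ^k / (Nat.factorial k) ≤ (n+1) * (μ^n / (Nat.factorial n)) := by
  constructor
  · exact Finset.single_le_sum (f := fun k => μ^k / (Nat.factorial k : ℝ)) (fun k _ => by positivity) (Finset.self_mem_range_succ n)
  · have := Finset.sum_le_card_nsmul (Finset.range (n+1)) (fun k => μ^k / (Nat.factorial k))
      (μ^n / (Nat.factorial n)) (fun k hk => term_mono μ hμ k n (Nat.lt_succ_iff.mp (Finset.mem_range.mp hk)) hn)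
    simpa [Finset.card_range, nsmul_eq_mul] using this

theorem poisson_lower_tail_log_asymptotics
    {Ω : Type*} [MeasureSpace Ω] [IsProbabilityMeasure (ℙ : Measure Ω)]
    (m : ℝ) (hm : 0 < m)
    (N : ℝ → Ω → ℕ) (hN : ∀ T > (0 : ℝ), IsPoissonRV (m * T) (N T))
    (x : ℝ) (hx0 : 0 < x) (hx : x ≤ m) :
    Filter.Tendsto
      (fun T : ℝ => (1 / T) * Real.log (ℙ {ω | (N T ω : ℝ) ≤ x * T}).toReal)
      Filter.atTop (nhds (-(x * Real.log (x / m) - x + m))) := by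
  set nn : ℝ → ℕ := fun T => ⌊x * T⌋₊ with hnn
  -- basic limits
  have hxT : Tendsto (fun T : ℝ => x * T) atTop atTop :=
    Tendsto.const_mul_atTop hx0 tendsto_id
  have hnA : Tendsto nn atTop atTop := tendsto_nat_floor_atTop.comp hxT
  have hnT : Tendsto (fun T : ℝ => (nn T : ℝ) / T) atTop (nhds x) := by
    have h1 : Tendsto (fun T : ℝ => ((⌊x*T⌋₊ : ℝ) / (x*T)) * x) atTop (nhds x) := by
      have := (tendsto_nat_floor_div_atTop (R := ℝ)).comp hxT
      simpa using this.mul_const x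
    refine h1.congr' ?_
    filter_upwards [eventually_gt_atTop 0] with T hT
    field_simp [hnn]
    ring
  -- limit of the main term
  have hA : Tendsto (fun T : ℝ => (1/T) * Real.log ((m*T)^(nn T) / (Nat.factorial (nn T))))
      atTop (nhds (x * (Real.log m - Real.log x) + x)) := by
    have hrhs : Tendsto (fun T : ℝ =>
        ((nn T : ℝ)/T) * (Real.log m - Real.log ((nn T : ℝ)/T)) + (nn T : ℝ)/T
          - ((Real.log (Nat.factorial (nn T)) - ((nn T:ℝ) * Real.log (nn T) - (nn T:ℝ)))/(nn T:ℝ)) * ((nn T : ℝ)/T))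
        atTop (nhds (x * (Real.log m - Real.log x) + x - 0 * x)) := by
      have hlogx : Tendsto (fun T : ℝ => Real.log ((nn T : ℝ)/T)) atTop (nhds (Real.log x)) :=
        ((Real.continuousAt_log hx0.ne').tendsto).comp hnT
      have herr : Tendsto (fun T : ℝ =>
          (Real.log (Nat.factorial (nn T)) - ((nn T:ℝ) * Real.log (nn T) - (nn T:ℝ)))/(nn T:ℝ))
          atTop (nhds 0) := stirling_err.comp hnA
      exact ((hnT.mul (tendsto_const_nhds.sub hlogx)).add hnT).sub (herr.mul hnT)
    rw [show x * (Real.log m - Real.log x) + x - 0 * x = x * (Real.log m - Real.log x) + x by ring] at hrhs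
    refine hrhs.congr' ?_
    filter_upwards [eventually_gt_atTop 0, hnA.eventually (eventually_ge_atTop 1)] with T hT hn1
    have hnr : (0:ℝ) < (nn T : ℝ) := by exact_mod_cast hn1
    have hmT : (0:ℝ) < m * T := mul_pos hm hT
    have hfac : (0:ℝ) < (Nat.factorial (nn T) : ℝ) := by positivity
    rw [Real.log_div (pow_ne_zero _ hmT.ne') hfac.ne', Real.log_pow,
      Real.log_mul hm.ne' hT.ne', Real.log_div hnr.ne' hT.ne']
    field_simp
    ring
  -- log(n+1)/T → 0
  have hB : Tendsto (fun T : ℝ => (1/T) * Real.log ((nn T : ℝ) + 1)) atTop (nhds 0) := by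
    have hl : Tendsto (fun y : ℝ => Real.log y / y) atTop (nhds 0) :=
      Real.isLittleO_log_id_atTop.tendsto_div_nhds_zero
    have hc : Tendsto (fun T : ℝ => (nn T : ℝ) + 1) atTop atTop :=
      tendsto_atTop_add_const_right _ 1 (tendsto_natCast_atTop_atTop.comp hnA)
    have hq : Tendsto (fun T : ℝ => ((nn T : ℝ) + 1)/T) atTop (nhds (x + 0)) := by
      have h1T : Tendsto (fun T : ℝ => (1:ℝ)/T) atTop (nhds 0) := by
        simpa using tendsto_inv_atTop_zero (𝕜 := ℝ)
      have := hnT.add h1T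
      refine this.congr fun T => ?_
      rw [add_div]
    have := (hl.comp hc).mul hq
    rw [zero_mul] at this
    refine this.congr' ?_
    filter_upwards [eventually_gt_atTop 0] with T hT
    have hp : (0:ℝ) < (nn T : ℝ) + 1 := by positivity
    simp only [Function.comp_apply]
    field_simp
  -- squeeze
  have hL : Tendsto (fun T : ℝ => -m + (1/T) * Real.log ((m*T)^(nn T) / (Nat.factorial (nn T))))
      atTop (nhds (-(x * Real.log (x / m) - x + m))) := by
    have := tendsto_const_nhds (α := ℝ) (x := -m) (f := atTop (α := ℝ)) |>.add hA
    convert this using 2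
    rw [Real.log_div hx0.ne' hm.ne']
    ring
  have hU : Tendsto (fun T : ℝ => (-m + (1/T) * Real.log ((m*T)^(nn T) / (Nat.factorial (nn T))))
      + (1/T) * Real.log ((nn T : ℝ) + 1)) atTop (nhds (-(x * Real.log (x / m) - x + m))) := by
    have := hL.add hB
    simpa using this
  refine tendsto_of_tendsto_of_tendsto_of_le_of_le' hL hU ?_ ?_
  all_goals {
    filter_upwards [eventually_gt_atTop 0, eventually_ge_atTop (1/x),
      hnA.eventually (eventually_ge_atTop 1)] with T hT hT1 hn1
    obtain ⟨hmeas, hpmf⟩ := hN T hT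
    have hmT : (0:ℝ) < m * T := mul_pos hm hT
    have hxTpos : (0:ℝ) < x * T := mul_pos hx0 hT
    have hnr : (0:ℝ) < (nn T : ℝ) := by exact_mod_cast hn1
    have hfac : (0:ℝ) < (Nat.factorial (nn T) : ℝ) := by positivity
    have hnle : ((nn T : ℕ) : ℝ) ≤ m * T :=
      le_trans (Nat.floor_le hxTpos.le) (by nlinarith)
    have hset : {ω | (N T ω : ℝ) ≤ x * T} = {ω | N T ω ≤ nn T} := by
      ext ω
      simp only [Set.mem_setOf_eq, hnn]
      exact (Nat.le_floor_iff hxTpos.le).symm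
    have hPs : (ℙ {ω | (N T ω : ℝ) ≤ x * T}).toReal
        = Real.exp (-(m*T)) * ∑ k ∈ Finset.range (nn T + 1), (m*T)^k / (Nat.factorial k) := by
      rw [hset, poisson_cdf (m*T) (N T) ⟨hmeas, hpmf⟩ (nn T) hmT.le, Finset.mul_sum]
      exact Finset.sum_congr rfl fun k _ => by rw [mul_div_assoc]
    obtain ⟨hlow, hup⟩ := sum_bounds (m*T) hmT (nn T) hnle
    have ha : (0:ℝ) < (m*T)^(nn T) / (Nat.factorial (nn T)) := by positivity
    have hSpos : (0:ℝ) < ∑ k ∈ Finset.range (nn T + 1), (m*T)^k / (Nat.factorial k) :=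
      lt_of_lt_of_le ha hlow
    rw [hPs, Real.log_mul (Real.exp_ne_zero _) hSpos.ne', Real.log_exp]
    have hT' : (0:ℝ) < 1/T := by positivity
    have hmu : (1/T) * (-(m*T)) = -m := by field_simp
    · -- inequality
      first
      | { -- lower bound
          have hlog : Real.log ((m*T)^(nn T) / (Nat.factorial (nn T)))
              ≤ Real.log (∑ k ∈ Finset.range (nn T + 1), (m*T)^k / (Nat.factorial k)) :=
            Real.log_le_log ha hlow
          calc -m + (1/T) * Real.log ((m*T)^(nn T) / (Nat.factorial (nn T)))
              ≤ -m + (1/T) * Real.log (∑ k ∈ Finset.range (nn T + 1), (m*T)^k / (Nat.factorial k)) := by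
                gcongr
            _ = (1/T) * (-(m*T) + Real.log (∑ k ∈ Finset.range (nn T + 1), (m*T)^k / (Nat.factorial k))) := by
                rw [mul_add, hmu] }
      | { -- upper bound
          have hlog : Real.log (∑ k ∈ Finset.range (nn T + 1), (m*T)^k / (Nat.factorial k))
              ≤ Real.log (((nn T : ℝ)+1) * ((m*T)^(nn T) / (Nat.factorial (nn T)))) :=
            Real.log_le_log hSpos (by exact_mod_cast hup)
          rw [Real.log_mul (by positivity) ha.ne'] at hlog
          calc (1/T) * (-(m*T) + Real.log (∑ k ∈ Finset.range (nn T + 1), (m*T)^k / (Nat.factorial k)))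
              ≤ (1/T) * (-(m*T) + (Real.log ((nn T:ℝ)+1) + Real.log ((m*T)^(nn T) / (Nat.factorial (nn T))))) := by
                gcongr
            _ = (-m + (1/T) * Real.log ((m*T)^(nn T) / (Nat.factorial (nn T)))) + (1/T) * Real.log ((nn T:ℝ)+1) := by
                rw [mul_add, hmu]; ring }
  }
end
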